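/- Let T_n be the triangular graph: the simple graph whose vertex set is 𝕀, with two distinct vertices α = (i,j) and β = (k,l) adjacent if and only if {i,j} ∩ {k,l} ≠ ∅. Then H = 4·I_L + A(T_n), where A(T_n) is the adjacency matrix of T_n and I_L is the L×L identity matrix. -/

import Mathlib

open Matrix

/-- The index set 𝕀 = {(i,j) : 1 ≤ i < j ≤ n}, realized as ordered pairs of `Fin n`. -/
abbrev Idx (n : ℕ) := {p : Fin n × Fin n // p.1 < p.2}

/-- The basis matrix `w_{i,j} = e_{i,i} + e_{j,j} - e_{i,j} - e_{j,i}`. -/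
noncomputable def w {n : ℕ} (α : Idx n) : Matrix (Fin n) (Fin n) ℝ :=
  single α.1.1 α.1.1 1 + single α.1.2 α.1.2 1
    - single α.1.1 α.1.2 1 - single α.1.2 α.1.1 1

/-- The inner product matrix `H` with entries `H_{α,β} = ⟨w_α, w_β⟩ = trace(w_αᵀ w_β)`. -/
noncomputable def H (n : ℕ) : Matrix (Idx n) (Idx n) ℝ :=
  Matrix.of fun α β => ((w α)ᵀ * w β).trace

/-- The triangular graph `T_n`: vertices are the pairs in 𝕀, and two distinct vertices
`α = (i,j)` and `β = (k,l)` are adjacent iff `{i,j} ∩ {k,l} ≠ ∅`. -/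
def triGraph (n : ℕ) : SimpleGraph (Idx n) where
  Adj a b := a ≠ b ∧ (({a.1.1, a.1.2} : Finset (Fin n)) ∩ {b.1.1, b.1.2}).Nonempty
  symm := ⟨fun a b h => ⟨h.1.symm, by rw [Finset.inter_comm]; exact h.2⟩⟩
  loopless := ⟨fun a h => h.1 rfl⟩

instance (n : ℕ) : DecidableRel (triGraph n).Adj := fun a b =>
  decidable_of_iff
    (a ≠ b ∧ (({a.1.1, a.1.2} : Finset (Fin n)) ∩ {b.1.1, b.1.2}).Nonempty) Iff.rfl


lemma trace_std_mul {n : ℕ} (a b : Fin n) (M : Matrix (Fin n) (Fin n) ℝ) :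
    ((single a b (1:ℝ))ᵀ * M).trace = M a b := by
  rw [Matrix.trace]
  simp only [Matrix.diag, Matrix.mul_apply, Matrix.transpose_apply,
    Matrix.single, Matrix.of_apply, ite_mul, one_mul, zero_mul]
  rw [Finset.sum_comm]
  rw [Finset.sum_eq_single a, Finset.sum_eq_single b] <;> simp +contextual [eq_comm]

lemma trace_w_mul {n : ℕ} (γ : Idx n) (M : Matrix (Fin n) (Fin n) ℝ) :
    ((w γ)ᵀ * M).trace = M γ.1.1 γ.1.1 + M γ.1.2 γ.1.2 - M γ.1.1 γ.1.2 - M γ.1.2 γ.1.1 := by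
  simp [w, Matrix.transpose_add, Matrix.transpose_sub, Matrix.sub_mul, Matrix.add_mul,
    trace_std_mul, Matrix.trace_sub, Matrix.trace_add, -Matrix.transpose_single]

set_option maxHeartbeats 1000000 in
theorem stmt1 {n : ℕ} (hn : 2 ≤ n) :
    H n = (4 : ℝ) • (1 : Matrix (Idx n) (Idx n) ℝ) + (triGraph n).adjMatrix ℝ := by
  ext α β
  obtain ⟨⟨i, j⟩, hij⟩ := α
  obtain ⟨⟨k, l⟩, hkl⟩ := β
  have key := trace_w_mul (⟨(i, j), hij⟩ : Idx n) (w ⟨(k, l), hkl⟩)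
  simp only [H, Matrix.of_apply]
  rw [key]
  clear key
  simp only [Matrix.add_apply, Matrix.smul_apply, Matrix.one_apply,
    SimpleGraph.adjMatrix_apply, triGraph, w, Matrix.sub_apply, Matrix.single,
    Matrix.of_apply, ne_eq, Subtype.mk.injEq, Prod.mk.injEq, smul_eq_mul]
  have hne1 : i ≠ j := hij.ne
  have hne2 : k ≠ l := hkl.ne
  rcases eq_or_ne i k with h1 | h1 <;> rcases eq_or_ne j l with h2 | h2 <;>
    rcases eq_or_ne i l with h3 | h3 <;> rcases eq_or_ne j k with h4 | h4 <;>
    subst_vars <;>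
    simp_all [Finset.Nonempty, lt_irrefl] <;>
    first
      | (norm_num; done)
      | exact absurd hkl (asymm hij)
      | (simp only [Ne.symm h1, Ne.symm h2, Ne.symm h3, Ne.symm h4, ite_false, and_false,
          false_and, if_false]; norm_num)
      | (split_ifs <;> simp_all <;> (try norm_num); done)
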